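/- Let d ≥ 2 be an even integer and Θ = (X₁,X₂) a d-small symbol with defining intervals whose middle region has cardinality 0, with right region [m+1, m+d/2] in row r and left region in row l = 3 − r. Then the d/2-cohooks of Θ are exactly the pairs (m+i, m+i−d/2) in row r for those indices 1 ≤ i ≤ d/2 with w_i = ∧ in w_ud(Θ); in particular Θ has no d/2-cohook in row l, and Θ has no d/2-cohook at all if and only if w_ud(Θ) contains no letter ∧. -/
import Mathlib


open scoped Classical

/-- A β-set: a set of integers containing all sufficiently small integers
and no sufficiently large ones. -/
def IsBetaSet (X : Set ℤ) : Prop :=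
  (∃ c : ℤ, ∀ z : ℤ, z < c → z ∈ X) ∧ (∃ C : ℤ, ∀ z : ℤ, C ≤ z → z ∉ X)

/-- `topB X = max X`. -/
noncomputable def topB (X : Set ℤ) : ℤ := sSup X

/-- `botB X = max {z | every integer < z lies in X}`. -/
noncomputable def botB (X : Set ℤ) : ℤ := sSup {z : ℤ | ∀ w : ℤ, w < z → w ∈ X}

/-- The charge `s(X)` of a β-set `X`, computed with the cutoff `c = botB X`. -/
noncomputable def chargeB (X : Set ℤ) : ℤ :=
  ((X ∩ Set.Ici (botB X)).ncard : ℤ) + botB X - 1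

/-- `elemSeq X j` is the `(j+1)`-st largest element of the β-set `X`. -/
noncomputable def elemSeq (X : Set ℤ) : ℕ → ℤ
  | 0 => sSup X
  | n + 1 => sSup (X ∩ Set.Iio (elemSeq X n))

/-- The partition `λ(X)` of a β-set `X`, `0`-indexed: `partB X j = λ_{j+1}`,
recovered from `x_j = s(X) + λ_j - j + 1` where `x_j` is the `j`-th largest element. -/
noncomputable def partB (X : Set ℤ) (j : ℕ) : ℕ :=
  (elemSeq X j - chargeB X + j).toNat

/-- The size `|λ(X)|` of the partition of a β-set `X`. -/
noncomputable def sizeB (X : Set ℤ) : ℕ := ∑ᶠ j : ℕ, partB X j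

/-- A partition, encoded as a weakly decreasing eventually zero function (0-indexed). -/
def IsPartition (μ : ℕ → ℕ) : Prop :=
  (∀ j, μ (j + 1) ≤ μ j) ∧ ∃ N, ∀ j, N ≤ j → μ j = 0

/-- The β-set `{s + λ_j - j + 1 : j ≥ 1}` of the partition `μ` with charge `s`. -/
def betaOf (μ : ℕ → ℕ) (s : ℤ) : Set ℤ :=
  {x : ℤ | ∃ j : ℕ, x = s + (μ j : ℤ) - (j : ℤ)}

/-- The symbol `Θ = (X₁, X₂)` is `d`-small with defining intervals
`I₁ = [a₁,b₁]` and `I₂ = [a₂,b₂]`. -/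
structure IsDSmallWith (d : ℤ) (X₁ X₂ : Set ℤ) (a₁ b₁ a₂ b₂ : ℤ) : Prop where
  len₁ : b₁ - a₁ = d / 2 - 1
  len₂ : b₂ - a₂ = d / 2 - 1
  bot₁ : a₁ ≤ botB X₁
  bot₂ : a₂ ≤ botB X₂
  top₁ : topB X₁ ≤ b₁
  top₂ : topB X₂ ≤ b₂
  cong : d ∣ b₂ - (b₁ + d / 2)

/-- The symbol `Θ = (X₁, X₂)` is `d`-small: it admits some pair of defining intervals. -/
def IsDSmall (d : ℤ) (X₁ X₂ : Set ℤ) : Prop :=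
  ∃ a₁ b₁ a₂ b₂ : ℤ, IsDSmallWith d X₁ X₂ a₁ b₁ a₂ b₂

/-- The row (`1` or `2`) containing the right region. -/
def rightRow (b₁ b₂ : ℤ) : ℕ := if b₁ < b₂ then 2 else 1

/-- The row, as a β-set, containing the right region. -/
def rightSet (X₁ X₂ : Set ℤ) (b₁ b₂ : ℤ) : Set ℤ := if b₁ < b₂ then X₂ else X₁

/-- The row, as a β-set, containing the left region. -/
def leftSet (X₁ X₂ : Set ℤ) (b₁ b₂ : ℤ) : Set ℤ := if b₁ < b₂ then X₁ else X₂

/-- The cardinality `kd` of the middle region. -/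
def middleLen (d b₁ b₂ : ℤ) : ℤ := |b₂ - b₁| - d / 2

/-- The alphabet `{∧, ∨, ×, ∘}` of up-down diagrams: `up = ∧`, `dn = ∨`,
`cross = ×`, `circ = ∘`. -/
inductive UD : Type
  | up
  | dn
  | cross
  | circ
deriving DecidableEq

/-- The up-down diagram `w_ud(Θ)` of a `d`-small symbol with defining intervals:
`wud d X₁ X₂ b₁ b₂ i` is the letter `w_i` for `1 ≤ i ≤ d/2`.  Here the right
region is `[m+1, m+d/2]` with `m = max b₁ b₂ - d/2`, `β_i = m + i`, and
`β_i - kd - d/2 = β_i - |b₂ - b₁|`. -/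
noncomputable def wud (d : ℤ) (X₁ X₂ : Set ℤ) (b₁ b₂ : ℤ) (i : ℤ) : UD :=
  if (max b₁ b₂ - d / 2 + i) ∈ rightSet X₁ X₂ b₁ b₂ then
    if (max b₁ b₂ - d / 2 + i) - |b₂ - b₁| ∈ leftSet X₁ X₂ b₁ b₂ then UD.cross else UD.up
  else
    if (max b₁ b₂ - d / 2 + i) - |b₂ - b₁| ∈ leftSet X₁ X₂ b₁ b₂ then UD.dn else UD.circ

/-- Removing an `e`-cohook in row `1` (the rows get interchanged afterwards). -/
def RemoveCohookRow1 (e : ℤ) (Θ Θ' : Set ℤ × Set ℤ) : Prop :=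
  ∃ x : ℤ, x ∈ Θ.1 ∧ x - e ∉ Θ.2 ∧ Θ' = (Θ.2 ∪ {x - e}, Θ.1 \ {x})

/-- Removing an `e`-cohook in row `2` (the rows get interchanged afterwards). -/
def RemoveCohookRow2 (e : ℤ) (Θ Θ' : Set ℤ × Set ℤ) : Prop :=
  ∃ x : ℤ, x ∈ Θ.2 ∧ x - e ∉ Θ.1 ∧ Θ' = (Θ.2 \ {x}, Θ.1 ∪ {x - e})

/-- Removing an `e`-cohook. -/
def RemoveCohook (e : ℤ) (Θ Θ' : Set ℤ × Set ℤ) : Prop :=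
  RemoveCohookRow1 e Θ Θ' ∨ RemoveCohookRow2 e Θ Θ'

/-- The symbol `Θ` has an `e`-cohook. -/
def HasCohook (e : ℤ) (Θ : Set ℤ × Set ℤ) : Prop :=
  (∃ x : ℤ, x ∈ Θ.1 ∧ x - e ∉ Θ.2) ∨ (∃ x : ℤ, x ∈ Θ.2 ∧ x - e ∉ Θ.1)

/-- `C` is an `e`-cocore of `Θ`: a symbol with no `e`-cohooks obtained from `Θ`
by a finite sequence of `e`-cohook removals. -/
def IsCocoreOf (e : ℤ) (Θ C : Set ℤ × Set ℤ) : Prop :=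
  Relation.ReflTransGen (RemoveCohook e) Θ C ∧ ¬ HasCohook e C

/-- The `n`-fold composition of a relation. -/
def RelPow {α : Type*} (R : α → α → Prop) : ℕ → α → α → Prop
  | 0 => Eq
  | n + 1 => fun a c => ∃ b, R a b ∧ RelPow R n b c

/-- `(a, b)` (row `a`, column `b`, both `1`-indexed) is a box of the partition `μ`
(`μ` is `0`-indexed, so `μ (a-1)` is the `a`-th part `λ_a`). -/
def IsBox (μ : ℕ → ℕ) (a b : ℕ) : Prop := 1 ≤ a ∧ 1 ≤ b ∧ b ≤ μ (a - 1)

/-- `(a, b)` is an addable box of `μ`: adjoining it yields a partition. -/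
def IsAddableBox (μ : ℕ → ℕ) (a b : ℕ) : Prop :=
  1 ≤ a ∧ b = μ (a - 1) + 1 ∧ (a = 1 ∨ b ≤ μ (a - 2))

/-- `(a, b)` is a removable box of `μ`: deleting it yields a partition. -/
def IsRemovableBox (μ : ℕ → ℕ) (a b : ℕ) : Prop :=
  1 ≤ a ∧ b = μ (a - 1) ∧ 1 ≤ b ∧ μ a < b

/-- The charged content `t + b - a` of the box in row `a` and column `b`,
with respect to the charge `t`. -/
def chCont (t : ℤ) (a b : ℕ) : ℤ := t + (b : ℤ) - (a : ℤ)

/-- Selecting the component `j ∈ {1, 2}` of a bipartition. -/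
def compPart (μ₁ μ₂ : ℕ → ℕ) (j : ℕ) : ℕ → ℕ := if j = 1 then μ₁ else μ₂

/-- Selecting the component `j ∈ {1, 2}` of a pair of charges. -/
def compT (t₁ t₂ : ℤ) (j : ℕ) : ℤ := if j = 1 then t₁ else t₂

/-- The box `(a, b)` in component `j` is a good removable `i`-box of the
bipartition `(μ₁, μ₂)` with charges `(t₁, t₂)`, where `r` is the row containing
the right region: it is a removable box of charged content `≡ i (mod d)` and
there is no addable box `A` of either component with charged content `≡ i (mod d)`
such that either `A` has strictly larger charged content, or `A` has equal
charged content and lies in component `r`. -/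
def IsGoodRemovableBox (d : ℤ) (μ₁ μ₂ : ℕ → ℕ) (t₁ t₂ : ℤ) (r : ℕ) (i : ℤ)
    (j a b : ℕ) : Prop :=
  (j = 1 ∨ j = 2) ∧ IsRemovableBox (compPart μ₁ μ₂ j) a b ∧
    d ∣ chCont (compT t₁ t₂ j) a b - i ∧
    ∀ j' a' b' : ℕ, (j' = 1 ∨ j' = 2) → IsAddableBox (compPart μ₁ μ₂ j') a' b' →
      d ∣ chCont (compT t₁ t₂ j') a' b' - i →
      ¬ (chCont (compT t₁ t₂ j) a b < chCont (compT t₁ t₂ j') a' b' ∨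
        (chCont (compT t₁ t₂ j') a' b' = chCont (compT t₁ t₂ j) a b ∧ j' = r))

/-- The position of a letter in the order `× < ∧ < ∨ < ∘`. -/
def udIdx : UD → ℕ
  | UD.cross => 0
  | UD.up => 1
  | UD.dn => 2
  | UD.circ => 3

/-- The word `w₁ ⋯ w_{d/2}` reads `×^α ∧^w ∨^h ∘^β`: all `×`'s first, then all
`∧`'s, then all `∨`'s, then all `∘`'s. -/
def SortedUD (d : ℤ) (w : ℤ → UD) : Prop :=
  ∀ i j : ℤ, 1 ≤ i → i ≤ j → j ≤ d / 2 → udIdx (w i) ≤ udIdx (w j)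

/-- The number of occurrences of the letter `u` in the word `w₁ ⋯ w_{d/2}`. -/
noncomputable def countUD (d : ℤ) (w : ℤ → UD) (u : UD) : ℕ :=
  ((Finset.Icc (1 : ℤ) (d / 2)).filter fun i => w i = u).card

/-- `w'` is obtained from `w` by permuting the letters `∧` and `∨` among the
positions carrying `∧` or `∨`, leaving every `×` and `∘` in place. -/
def PermUpDn (d : ℤ) (w w' : ℤ → UD) : Prop :=
  (∀ i : ℤ, 1 ≤ i → i ≤ d / 2 →
    ((w' i = UD.cross ↔ w i = UD.cross) ∧ (w' i = UD.circ ↔ w i = UD.circ))) ∧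
  countUD d w' UD.up = countUD d w UD.up

/-- Replace every letter `∧` by `∨`, leaving the other letters unchanged. -/
def replaceUp : UD → UD
  | UD.up => UD.dn
  | u => u

lemma beta_mem_le {X : Set ℤ} (hX : IsBetaSet X) {b x : ℤ}
    (hb : topB X ≤ b) (hx : x ∈ X) : x ≤ b := by
  obtain ⟨_, C, hC⟩ := hX
  have : x ≤ topB X := le_csSup ⟨C, fun y hy => le_of_not_gt fun h => hC y h.le hy⟩ hx
  omega

lemma beta_mem_of_lt {X : Set ℤ} (hX : IsBetaSet X) {a z : ℤ}
    (ha : a ≤ botB X) (hz : z < a) : z ∈ X := by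
  obtain ⟨⟨c, hc⟩, C, hC⟩ := hX
  have hz' : z < sSup {z : ℤ | ∀ w : ℤ, w < z → w ∈ X} := lt_of_lt_of_le hz ha
  have hne : Set.Nonempty {z : ℤ | ∀ w : ℤ, w < z → w ∈ X} := ⟨c, fun w hw => hc w hw⟩
  obtain ⟨s, hs, h2⟩ := exists_lt_of_lt_csSup hne hz'
  exact hs z h2

lemma wud_up_iff (d : ℤ) (X₁ X₂ : Set ℤ) (b₁ b₂ i : ℤ) :
    wud d X₁ X₂ b₁ b₂ i = UD.up ↔
      ((max b₁ b₂ - d / 2 + i) ∈ rightSet X₁ X₂ b₁ b₂ ∧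
        (max b₁ b₂ - d / 2 + i) - |b₂ - b₁| ∉ leftSet X₁ X₂ b₁ b₂) := by
  unfold wud
  split_ifs with h1 h2 h2 <;> simp_all

lemma aux9 (k : ℤ) (hk : 1 ≤ k) (Xr Xl : Set ℤ) (br : ℤ)
    (hrt : ∀ x ∈ Xr, x ≤ br) (hrb : ∀ z : ℤ, z ≤ br - k → z ∈ Xr)
    (hltop : ∀ x ∈ Xl, x ≤ br - k) (hlb : ∀ z : ℤ, z ≤ br - 2 * k → z ∈ Xl) :
    (∀ x : ℤ, ¬ (x ∈ Xl ∧ x - k ∉ Xr)) ∧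
    (∀ x : ℤ, (x ∈ Xr ∧ x - k ∉ Xl) ↔
      ∃ i : ℤ, 1 ≤ i ∧ i ≤ k ∧ x = br - k + i ∧
        br - k + i ∈ Xr ∧ br - k + i - k ∉ Xl) := by
  constructor
  · rintro x ⟨h1, h2⟩
    exact h2 (hrb _ (by have := hltop x h1; omega))
  · intro x
    constructor
    · rintro ⟨h1, h2⟩
      have hx1 := hrt x h1
      have hx2 : br - k < x := by
        by_contra h
        push_neg at h
        exact h2 (hlb _ (by omega))
      refine ⟨x - (br - k), by omega, by omega, by omega, ?_, ?_⟩
      · rw [show br - k + (x - (br - k)) = x by ring]; exact h1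
      · rw [show br - k + (x - (br - k)) - k = x - k by ring]; exact h2
    · rintro ⟨i, h1, h2, rfl, h4, h5⟩
      exact ⟨h4, h5⟩

/-- For a `d`-small symbol `Θ = (X₁,X₂)` with defining intervals
whose middle region has cardinality `0` (right region `[m+1, m+d/2]` in row `r`, left
region in row `l`): the `d/2`-cohooks of `Θ` are exactly the pairs `(m+i, m+i-d/2)` in
row `r` where `w_i = ∧`; there is no `d/2`-cohook in row `l`; and `Θ` has no
`d/2`-cohook at all iff `w_ud(Θ)` contains no `∧`. -/
theorem stmt9 (d : ℤ) (hd : 2 ≤ d) (hdE : Even d)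
    (X₁ X₂ : Set ℤ) (hX₁ : IsBetaSet X₁) (hX₂ : IsBetaSet X₂)
    (a₁ b₁ a₂ b₂ : ℤ) (hsm : IsDSmallWith d X₁ X₂ a₁ b₁ a₂ b₂)
    (hmid : middleLen d b₁ b₂ = 0) :
    (∀ x : ℤ, ¬ (x ∈ leftSet X₁ X₂ b₁ b₂ ∧ x - d / 2 ∉ rightSet X₁ X₂ b₁ b₂)) ∧
    (∀ x : ℤ, (x ∈ rightSet X₁ X₂ b₁ b₂ ∧ x - d / 2 ∉ leftSet X₁ X₂ b₁ b₂) ↔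
      ∃ i : ℤ, 1 ≤ i ∧ i ≤ d / 2 ∧ x = max b₁ b₂ - d / 2 + i ∧
        wud d X₁ X₂ b₁ b₂ i = UD.up) ∧
    (¬ HasCohook (d / 2) (X₁, X₂) ↔
      ∀ i : ℤ, 1 ≤ i → i ≤ d / 2 → wud d X₁ X₂ b₁ b₂ i ≠ UD.up) := by
  obtain ⟨m, hm⟩ := hdE
  have hd2 : d / 2 = m := by omega
  have hm1 : 1 ≤ m := by omega
  have hl1 := hsm.len₁
  have hl2 := hsm.len₂
  rcases lt_or_ge b₁ b₂ with hlt | hle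
  · have habs : |b₂ - b₁| = b₂ - b₁ := abs_of_nonneg (by omega)
    have hb21 : b₂ - b₁ = m := by unfold middleLen at hmid; omega
    have habs' : |b₂ - b₁| = m := by omega
    have hmax : max b₁ b₂ = b₂ := max_eq_right hlt.le
    have hR : rightSet X₁ X₂ b₁ b₂ = X₂ := if_pos hlt
    have hL : leftSet X₁ X₂ b₁ b₂ = X₁ := if_pos hlt
    obtain ⟨P1, P2⟩ := aux9 m hm1 X₂ X₁ b₂
      (fun x hx => beta_mem_le hX₂ hsm.top₂ hx)
      (fun z hz => beta_mem_of_lt hX₂ hsm.bot₂ (by omega))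
      (fun x hx => by have := beta_mem_le hX₁ hsm.top₁ hx; omega)
      (fun z hz => beta_mem_of_lt hX₁ hsm.bot₁ (by omega))
    refine ⟨?_, ?_, ?_⟩
    · rw [hL, hR, hd2]; exact P1
    · intro x
      rw [hR, hL, hd2, hmax]
      simp only [wud_up_iff, hR, hL, habs', hd2, hmax]
      exact P2 x
    · constructor
      · intro hnc i hi1 hi2 hup
        rw [wud_up_iff, hR, hL, habs', hd2, hmax] at hup
        have hi2' : i ≤ m := by omega
        have hmem := (P2 (b₂ - m + i)).mpr ⟨i, hi1, hi2', rfl, hup⟩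
        have h1 : (b₂ - m + i) - d / 2 ∉ X₁ := by rw [hd2]; exact hmem.2
        exact hnc (Or.inr ⟨b₂ - m + i, hmem.1, h1⟩)
      · rintro hall (⟨x, hx1, hx2⟩ | ⟨x, hx1, hx2⟩)
        · rw [hd2] at hx2; exact P1 x ⟨hx1, hx2⟩
        · rw [hd2] at hx2
          obtain ⟨i, h1, h2, _, hup⟩ := (P2 x).mp ⟨hx1, hx2⟩
          refine hall i h1 (by omega) ?_
          rw [wud_up_iff, hR, hL, habs', hd2, hmax]
          exact hup
  · have habs : |b₂ - b₁| = b₁ - b₂ := by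
      rw [abs_sub_comm]; exact abs_of_nonneg (by omega)
    have hb21 : b₁ - b₂ = m := by unfold middleLen at hmid; omega
    have habs' : |b₂ - b₁| = m := by omega
    have hmax : max b₁ b₂ = b₁ := max_eq_left hle
    have hnlt : ¬ b₁ < b₂ := not_lt.mpr hle
    have hR : rightSet X₁ X₂ b₁ b₂ = X₁ := if_neg hnlt
    have hL : leftSet X₁ X₂ b₁ b₂ = X₂ := if_neg hnlt
    obtain ⟨P1, P2⟩ := aux9 m hm1 X₁ X₂ b₁
      (fun x hx => beta_mem_le hX₁ hsm.top₁ hx)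
      (fun z hz => beta_mem_of_lt hX₁ hsm.bot₁ (by omega))
      (fun x hx => by have := beta_mem_le hX₂ hsm.top₂ hx; omega)
      (fun z hz => beta_mem_of_lt hX₂ hsm.bot₂ (by omega))
    refine ⟨?_, ?_, ?_⟩
    · rw [hL, hR, hd2]; exact P1
    · intro x
      rw [hR, hL, hd2, hmax]
      simp only [wud_up_iff, hR, hL, habs', hd2, hmax]
      exact P2 x
    · constructor
      · intro hnc i hi1 hi2 hup
        rw [wud_up_iff, hR, hL, habs', hd2, hmax] at hup
        have hi2' : i ≤ m := by omega
        have hmem := (P2 (b₁ - m + i)).mpr ⟨i, hi1, hi2', rfl, hup⟩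
        have h1 : (b₁ - m + i) - d / 2 ∉ X₂ := by rw [hd2]; exact hmem.2
        exact hnc (Or.inl ⟨b₁ - m + i, hmem.1, h1⟩)
      · rintro hall (⟨x, hx1, hx2⟩ | ⟨x, hx1, hx2⟩)
        · rw [hd2] at hx2
          obtain ⟨i, h1, h2, _, hup⟩ := (P2 x).mp ⟨hx1, hx2⟩
          refine hall i h1 (by omega) ?_
          rw [wud_up_iff, hR, hL, habs', hd2, hmax]
          exact hup
        · rw [hd2] at hx2; exact P1 x ⟨hx1, hx2⟩
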